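/- Let X be a finitely generated abelian group and S a finite symmetric generating set of X (s∈S implies s⁻¹∈S, and the identity is not in S). Let G be the Cayley graph of X with respect to S. Then Ric(G) ≥ 0: for every f:X→ℝ and every x∈X, Γ₂(f)(x) ≥ 0. -/

import Mathlib

noncomputable section
open Matrix

/-- The graph Laplacian: `Δ f (x) = Σ_{y ~ x} (f y - f x)`. -/
def lap {V : Type*} (G : SimpleGraph V) (f : V → ℝ) (x : V) : ℝ :=
  ∑ᶠ y ∈ {y | G.Adj x y}, (f y - f x)

/-- The carré du champ `Γ(f,g)(x) = (1/2) Σ_{y ~ x} (f x - f y)(g x - g y)`. -/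
def gam {V : Type*} (G : SimpleGraph V) (f g : V → ℝ) (x : V) : ℝ :=
  (1/2) * ∑ᶠ y ∈ {y | G.Adj x y}, (f x - f y) * (g x - g y)

/-- The iterated carré du champ `Γ₂(f) = (1/2) Δ Γ(f) - Γ(f, Δ f)`. -/
def gam2 {V : Type*} (G : SimpleGraph V) (f : V → ℝ) (x : V) : ℝ :=
  (1/2) * lap G (gam G f f) x - gam G f (lap G f) x

/-- `Ric(G) ≥ K` : the Bochner inequality `Γ₂(f)(x) ≥ K Γ(f)(x)` holds for all `f, x`. -/
def RicGE {V : Type*} (G : SimpleGraph V) (K : ℝ) : Prop :=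
  ∀ (f : V → ℝ) (x : V), K * gam G f f x ≤ gam2 G f x

/-- The Cayley graph of a group `X` with respect to a symmetric set `S` not containing `1`:
`x ~ y` iff `x⁻¹ * y ∈ S`. -/
def cayleyGraph (X : Type*) [Group X] (S : Set X) (hsym : ∀ s ∈ S, s⁻¹ ∈ S)
    (h1 : (1 : X) ∉ S) : SimpleGraph X where
  Adj x y := x⁻¹ * y ∈ S
  symm := by
    constructor
    intro x y h
    simpa [_root_.mul_inv_rev] using hsym _ h
  loopless := by
    constructor
    intro x h
    rw [inv_mul_cancel] at h
    exact h1 h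

/-- the Cayley graph of a finitely generated abelian group with respect to
any finite symmetric generating set has `Ric ≥ 0`: `Γ₂(f)(x) ≥ 0` for all `f, x`. -/
theorem cayley_abelian_ric_nonneg (X : Type*) [CommGroup X] (S : Set X)
    (hfin : S.Finite) (hsym : ∀ s ∈ S, s⁻¹ ∈ S) (h1 : (1 : X) ∉ S)
    (hgen : Subgroup.closure S = ⊤) :
    ∀ (f : X → ℝ) (x : X), 0 ≤ gam2 (cayleyGraph X S hsym h1) f x := by
  intro f x
  classical
  have key : ∀ (g : X → ℝ) (z : X),
      ∑ᶠ y ∈ {y | (cayleyGraph X S hsym h1).Adj z y}, g y = ∑ s ∈ hfin.toFinset, g (z * s) := by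
    intro g z
    have hset : {y | (cayleyGraph X S hsym h1).Adj z y} = (fun s => z * s) '' S := by
      ext y
      simp only [cayleyGraph, Set.mem_setOf_eq, Set.mem_image]
      constructor
      · intro h; exact ⟨z⁻¹ * y, h, by group⟩
      · rintro ⟨s, hs, rfl⟩; simpa using hs
    rw [hset, finsum_mem_image (fun a _ b _ h => mul_left_cancel h),
      ← finsum_mem_coe_finset, hfin.coe_toFinset]
  have hlap : ∀ (g : X → ℝ) (z : X), lap (cayleyGraph X S hsym h1) g z
      = ∑ s ∈ hfin.toFinset, (g (z * s) - g z) := fun g z => key _ z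
  have hgam : ∀ (g h : X → ℝ) (z : X), gam (cayleyGraph X S hsym h1) g h z
      = (1/2) * ∑ s ∈ hfin.toFinset, (g z - g (z * s)) * (h z - h (z * s)) :=
    fun g h z => by rw [gam, key]
  rw [gam2]
  simp only [hlap, hgam]
  set F := hfin.toFinset with hF
  set T : X → X → ℝ := fun a b =>
    (1/4) * ((f (x*a) - f (x*a*b)) * (f (x*a) - f (x*a*b))
      - (f x - f (x*b)) * (f x - f (x*b)))
    - (1/2) * ((f x - f (x*a)) * ((f (x*b) - f x) - (f (x*a*b) - f (x*a)))) with hTdef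
  have heq : (1/2 : ℝ) *
        ∑ a ∈ F,
          (1/2 * ∑ b ∈ F, (f (x * a) - f (x * a * b)) * (f (x * a) - f (x * a * b)) -
            1/2 * ∑ b ∈ F, (f x - f (x * b)) * (f x - f (x * b))) -
      1/2 *
        ∑ a ∈ F,
          (f x - f (x * a)) *
            (∑ b ∈ F, (f (x * b) - f x) - ∑ b ∈ F, (f (x * a * b) - f (x * a))) =
      ∑ a ∈ F, ∑ b ∈ F, T a b := by
    simp only [Finset.mul_sum, ← Finset.sum_sub_distrib]
    refine Finset.sum_congr rfl fun a _ => ?_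
    refine Finset.sum_congr rfl fun b _ => ?_
    simp only [hTdef]
    ring
  rw [heq]
  have hswap : ∑ a ∈ F, ∑ b ∈ F, T a b = (1/2) * ∑ a ∈ F, ∑ b ∈ F, (T a b + T b a) := by
    simp only [Finset.sum_add_distrib]
    rw [Finset.sum_comm (f := fun a b => T b a)]
    ring
  rw [hswap]
  have hnn : ∀ a b : X, 0 ≤ T a b + T b a := by
    intro a b
    have h : x * b * a = x * a * b := mul_right_comm x b a
    simp only [hTdef, h]
    nlinarith [sq_nonneg (f (x*a) + f (x*b) - f (x*a*b) - f x)]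
  exact mul_nonneg (by norm_num)
    (Finset.sum_nonneg fun a _ => Finset.sum_nonneg fun b _ => hnn a b)
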